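/- arXiv:2004.14697 — 2 statements merged into one kernel-verified Lean document; each statement's English description precedes it below -/
import Mathlib

section
/- For a ∈ (0,1) let P_a = {(x₁,x₂) ∈ ℝ² : x₁ ≥ 0, x₂ ≥ 0, x₁ + x₂ ≤ 1, x₂ ≤ a} and on its interior define u_G(x₁,x₂) = (1/2)( x₁ log x₁ − x₁ + x₂ log x₂ − x₂ + (1−x₁−x₂) log(1−x₁−x₂) − (1−x₁−x₂) + (a−x₂) log(a−x₂) − (a−x₂) ). Then: (i) for every (x₁,x₂) in the interior of P_a, det Hess u_G (x₁,x₂) = (a − x₂²) / (4 x₁ x₂ (a−x₂)(1−x₁−x₂)); (ii) a point (x₁,x₂) in the interior of P_a is a critical point of det Hess u_G if and only if x₁ = (1−x₂)/2 and 2x₂⁴ − a x₂³ − 5a x₂² + a(3a+2) x₂ − a² = 0; and (iii) for every a ∈ (0,1) the polynomial y ↦ 2y⁴ − ay³ − 5ay² + a(3a+2)y − a² has exactly one root in (0,a), so that det Hess u_G has a unique critical point in the interior of P_a. -/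
open Real Set Topology Filter Matrix

/-- `i`-th partial derivative of a function on `ℝⁿ`. -/
noncomputable def pd {n : ℕ} (i : Fin n) (f : (Fin n → ℝ) → ℝ) : (Fin n → ℝ) → ℝ :=
  fun x => fderiv ℝ f x (Pi.single i 1)

/-- Hessian matrix of a function on `ℝⁿ`. -/
noncomputable def Hess {n : ℕ} (u : (Fin n → ℝ) → ℝ) (x : Fin n → ℝ) :
    Matrix (Fin n) (Fin n) ℝ :=
  Matrix.of fun i j => pd i (pd j u) x

/-- The orbital volume function `V = (det Hess u)^(-1/2)`. -/
noncomputable def orbVol {n : ℕ} (u : (Fin n → ℝ) → ℝ) : (Fin n → ℝ) → ℝ :=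
  fun x => (Hess u x).det ^ (-(1/2 : ℝ))

/-- Guillemin potential of the one-point blow-up of `ℂP²` with parameter `a`. -/
noncomputable def uGHirz (a : ℝ) : (Fin 2 → ℝ) → ℝ := fun x =>
  (1/2) * (x 0 * Real.log (x 0) - x 0 + x 1 * Real.log (x 1) - x 1
    + (1 - x 0 - x 1) * Real.log (1 - x 0 - x 1) - (1 - x 0 - x 1)
    + (a - x 1) * Real.log (a - x 1) - (a - x 1))

/-- Interior of the moment polytope of the one-point blow-up of `ℂP²`. -/
def hirzInt (a : ℝ) : Set (Fin 2 → ℝ) :=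
  {x | 0 < x 0 ∧ 0 < x 1 ∧ x 0 + x 1 < 1 ∧ x 1 < a}

/-! ### Auxiliary material -/

noncomputable def E0 : (Fin 2 → ℝ) →L[ℝ] ℝ := ContinuousLinearMap.proj 0
noncomputable def E1 : (Fin 2 → ℝ) →L[ℝ] ℝ := ContinuousLinearMap.proj 1

lemma hE0 (x : Fin 2 → ℝ) : HasFDerivAt (fun y : Fin 2 → ℝ => y 0) E0 x := E0.hasFDerivAt
lemma hE1 (x : Fin 2 → ℝ) : HasFDerivAt (fun y : Fin 2 → ℝ => y 1) E1 x := E1.hasFDerivAt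

lemma isOpen_hirzInt (a : ℝ) : IsOpen (hirzInt a) := by
  have h1 : IsOpen {x : Fin 2 → ℝ | 0 < x 0} := isOpen_lt continuous_const (continuous_apply 0)
  have h2 : IsOpen {x : Fin 2 → ℝ | 0 < x 1} := isOpen_lt continuous_const (continuous_apply 1)
  have h3 : IsOpen {x : Fin 2 → ℝ | x 0 + x 1 < 1} :=
    isOpen_lt ((continuous_apply 0).add (continuous_apply 1)) continuous_const
  have h4 : IsOpen {x : Fin 2 → ℝ | x 1 < a} := isOpen_lt (continuous_apply 1) continuous_const
  exact h1.and (h2.and (h3.and h4))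

lemma hasFDerivAt_uG (a : ℝ) (x : Fin 2 → ℝ) (h0 : 0 < x 0) (h1 : 0 < x 1)
    (hs : 0 < 1 - x 0 - x 1) (hw : 0 < a - x 1) :
    HasFDerivAt (uGHirz a)
      (((1/2) * (Real.log (x 0) - Real.log (1 - x 0 - x 1))) • E0 +
       ((1/2) * (Real.log (x 1) - Real.log (1 - x 0 - x 1) - Real.log (a - x 1))) • E1) x := by
  have hsd : HasFDerivAt (fun y : Fin 2 → ℝ => 1 - y 0 - y 1) (0 - E0 - E1) x :=
    ((hasFDerivAt_const (1:ℝ) x).sub (hE0 x)).sub (hE1 x)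
  have hwd : HasFDerivAt (fun y : Fin 2 → ℝ => a - y 1) (0 - E1) x :=
    (hasFDerivAt_const a x).sub (hE1 x)
  have t0 : HasFDerivAt (fun y : Fin 2 → ℝ => y 0 * Real.log (y 0))
      (x 0 • ((x 0)⁻¹ • E0) + Real.log (x 0) • E0) x :=
    (hE0 x).mul ((hE0 x).log h0.ne')
  have t1 : HasFDerivAt (fun y : Fin 2 → ℝ => y 1 * Real.log (y 1))
      (x 1 • ((x 1)⁻¹ • E1) + Real.log (x 1) • E1) x :=
    (hE1 x).mul ((hE1 x).log h1.ne')
  have t2 : HasFDerivAt (fun y : Fin 2 → ℝ => (1 - y 0 - y 1) * Real.log (1 - y 0 - y 1))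
      ((1 - x 0 - x 1) • ((1 - x 0 - x 1)⁻¹ • (0 - E0 - E1))
        + Real.log (1 - x 0 - x 1) • (0 - E0 - E1)) x :=
    hsd.mul (hsd.log hs.ne')
  have t3 : HasFDerivAt (fun y : Fin 2 → ℝ => (a - y 1) * Real.log (a - y 1))
      ((a - x 1) • ((a - x 1)⁻¹ • (0 - E1)) + Real.log (a - x 1) • (0 - E1)) x :=
    hwd.mul (hwd.log hw.ne')
  have big := (((((((t0.sub (hE0 x)).add t1).sub (hE1 x)).add t2).sub hsd).add
    t3).sub hwd).const_mul (1/2 : ℝ)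
  refine big.congr_fderiv ?_
  ext v
  simp only [ContinuousLinearMap.coe_smul', Pi.smul_apply, ContinuousLinearMap.add_apply,
    ContinuousLinearMap.sub_apply, ContinuousLinearMap.smul_apply, ContinuousLinearMap.zero_apply,
    smul_eq_mul]
  field_simp
  ring

lemma hasFDerivAt_g0 (x : Fin 2 → ℝ) (h0 : 0 < x 0) (hs : 0 < 1 - x 0 - x 1) :
    HasFDerivAt (fun y : Fin 2 → ℝ => (1/2) * (Real.log (y 0) - Real.log (1 - y 0 - y 1)))
      (((1/2) * ((x 0)⁻¹ + (1 - x 0 - x 1)⁻¹)) • E0 +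
       ((1/2) * (1 - x 0 - x 1)⁻¹) • E1) x := by
  have hsd : HasFDerivAt (fun y : Fin 2 → ℝ => 1 - y 0 - y 1) (0 - E0 - E1) x :=
    ((hasFDerivAt_const (1:ℝ) x).sub (hE0 x)).sub (hE1 x)
  have big := (((hE0 x).log h0.ne').sub (hsd.log hs.ne')).const_mul (1/2 : ℝ)
  refine big.congr_fderiv ?_
  ext v
  simp only [ContinuousLinearMap.coe_smul', Pi.smul_apply, ContinuousLinearMap.add_apply,
    ContinuousLinearMap.sub_apply, ContinuousLinearMap.smul_apply, ContinuousLinearMap.zero_apply,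
    smul_eq_mul]
  ring

lemma hasFDerivAt_g1 (a : ℝ) (x : Fin 2 → ℝ) (h1 : 0 < x 1)
    (hs : 0 < 1 - x 0 - x 1) (hw : 0 < a - x 1) :
    HasFDerivAt (fun y : Fin 2 → ℝ =>
        (1/2) * (Real.log (y 1) - Real.log (1 - y 0 - y 1) - Real.log (a - y 1)))
      (((1/2) * (1 - x 0 - x 1)⁻¹) • E0 +
       ((1/2) * ((x 1)⁻¹ + (1 - x 0 - x 1)⁻¹ + (a - x 1)⁻¹)) • E1) x := by
  have hsd : HasFDerivAt (fun y : Fin 2 → ℝ => 1 - y 0 - y 1) (0 - E0 - E1) x :=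
    ((hasFDerivAt_const (1:ℝ) x).sub (hE0 x)).sub (hE1 x)
  have hwd : HasFDerivAt (fun y : Fin 2 → ℝ => a - y 1) (0 - E1) x :=
    (hasFDerivAt_const a x).sub (hE1 x)
  have big := ((((hE1 x).log h1.ne').sub (hsd.log hs.ne')).sub
    (hwd.log hw.ne')).const_mul (1/2 : ℝ)
  refine big.congr_fderiv ?_
  ext v
  simp only [ContinuousLinearMap.coe_smul', Pi.smul_apply, ContinuousLinearMap.add_apply,
    ContinuousLinearMap.sub_apply, ContinuousLinearMap.smul_apply, ContinuousLinearMap.zero_apply,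
    smul_eq_mul]
  ring

lemma pd_uG0 (a : ℝ) (x : Fin 2 → ℝ) (h0 : 0 < x 0) (h1 : 0 < x 1)
    (hs : 0 < 1 - x 0 - x 1) (hw : 0 < a - x 1) :
    pd 0 (uGHirz a) x = (1/2) * (Real.log (x 0) - Real.log (1 - x 0 - x 1)) := by
  have h := (hasFDerivAt_uG a x h0 h1 hs hw).fderiv
  simp only [pd, h, ContinuousLinearMap.add_apply, ContinuousLinearMap.smul_apply, smul_eq_mul,
    E0, E1, ContinuousLinearMap.proj_apply]
  simp

lemma pd_uG1 (a : ℝ) (x : Fin 2 → ℝ) (h0 : 0 < x 0) (h1 : 0 < x 1)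
    (hs : 0 < 1 - x 0 - x 1) (hw : 0 < a - x 1) :
    pd 1 (uGHirz a) x
      = (1/2) * (Real.log (x 1) - Real.log (1 - x 0 - x 1) - Real.log (a - x 1)) := by
  have h := (hasFDerivAt_uG a x h0 h1 hs hw).fderiv
  simp only [pd, h, ContinuousLinearMap.add_apply, ContinuousLinearMap.smul_apply, smul_eq_mul,
    E0, E1, ContinuousLinearMap.proj_apply]
  simp

lemma hirz_facts {a : ℝ} {x : Fin 2 → ℝ} (ha : a ∈ Ioo (0:ℝ) 1) (hx : x ∈ hirzInt a) :
    0 < x 0 ∧ 0 < x 1 ∧ 0 < 1 - x 0 - x 1 ∧ 0 < a - x 1 ∧ 0 < a - (x 1)^2 := by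
  obtain ⟨h0, h1, hsum, hwa⟩ := hx
  refine ⟨h0, h1, by linarith, by linarith, ?_⟩
  nlinarith

lemma hess_entries (a : ℝ) (ha : a ∈ Ioo (0:ℝ) 1) (x : Fin 2 → ℝ) (hx : x ∈ hirzInt a) :
    Hess (uGHirz a) x 0 0 = (1/2) * ((x 0)⁻¹ + (1 - x 0 - x 1)⁻¹) ∧
    Hess (uGHirz a) x 0 1 = (1/2) * (1 - x 0 - x 1)⁻¹ ∧
    Hess (uGHirz a) x 1 0 = (1/2) * (1 - x 0 - x 1)⁻¹ ∧
    Hess (uGHirz a) x 1 1 = (1/2) * ((x 1)⁻¹ + (1 - x 0 - x 1)⁻¹ + (a - x 1)⁻¹) := by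
  obtain ⟨h0, h1, hs, hw, hN⟩ := hirz_facts ha hx
  have hmem := (isOpen_hirzInt a).mem_nhds hx
  have hev0 : pd 0 (uGHirz a) =ᶠ[nhds x]
      (fun y => (1/2) * (Real.log (y 0) - Real.log (1 - y 0 - y 1))) := by
    filter_upwards [hmem] with y hy
    obtain ⟨k0, k1, ks, kw, _⟩ := hirz_facts ha hy
    exact pd_uG0 a y k0 k1 ks kw
  have hev1 : pd 1 (uGHirz a) =ᶠ[nhds x]
      (fun y => (1/2) * (Real.log (y 1) - Real.log (1 - y 0 - y 1) - Real.log (a - y 1))) := by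
    filter_upwards [hmem] with y hy
    obtain ⟨k0, k1, ks, kw, _⟩ := hirz_facts ha hy
    exact pd_uG1 a y k0 k1 ks kw
  have hf0 : fderiv ℝ (pd 0 (uGHirz a)) x = _ := hev0.fderiv_eq
  have hf1 : fderiv ℝ (pd 1 (uGHirz a)) x = _ := hev1.fderiv_eq
  have hg0 := (hasFDerivAt_g0 x h0 hs).fderiv
  have hg1 := (hasFDerivAt_g1 a x h1 hs hw).fderiv
  refine ⟨?_, ?_, ?_, ?_⟩ <;>
  · show pd _ (pd _ (uGHirz a)) x = _
    simp only [pd, hf0, hf1, hg0, hg1, ContinuousLinearMap.add_apply,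
      ContinuousLinearMap.smul_apply, smul_eq_mul, E0, E1, ContinuousLinearMap.proj_apply]
    simp

lemma part1 (a : ℝ) (ha : a ∈ Ioo (0:ℝ) 1) (x : Fin 2 → ℝ) (hx : x ∈ hirzInt a) :
    (Hess (uGHirz a) x).det =
      (a - (x 1)^2) / (4 * x 0 * x 1 * (a - x 1) * (1 - x 0 - x 1)) := by
  obtain ⟨h0, h1, hs, hw, hN⟩ := hirz_facts ha hx
  obtain ⟨e00, e01, e10, e11⟩ := hess_entries a ha x hx
  rw [Matrix.det_fin_two, e00, e01, e10, e11]
  have hx0 : x 0 ≠ 0 := h0.ne'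
  have hx1 : x 1 ≠ 0 := h1.ne'
  have hss : (1:ℝ) - x 0 - x 1 ≠ 0 := hs.ne'
  have hww : a - x 1 ≠ 0 := hw.ne'
  field_simp
  ring

noncomputable def DD (a : ℝ) : (Fin 2 → ℝ) → ℝ := fun y =>
  (a - y 1 * y 1) * (4 * y 0 * y 1 * (a - y 1) * (1 - y 0 - y 1))⁻¹

lemma hasFDerivAt_DD (a : ℝ) (x : Fin 2 → ℝ) (c0 c1 : ℝ) (h0 : 0 < x 0) (h1 : 0 < x 1)
    (hs : 0 < 1 - x 0 - x 1) (hw : 0 < a - x 1)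
    (hc0 : c0 = (a - x 1 ^ 2) * (2 * x 0 + x 1 - 1) /
          (4 * x 0 ^ 2 * x 1 * (a - x 1) * (1 - x 0 - x 1) ^ 2))
    (hc1 : c1 = (-2 * x 1 ^ 2 * (a - x 1) * (1 - x 0 - x 1)
            - (a - x 1 ^ 2) * ((a - 2 * x 1) * (1 - x 0 - x 1) - x 1 * (a - x 1))) /
          (4 * x 0 * x 1 ^ 2 * (a - x 1) ^ 2 * (1 - x 0 - x 1) ^ 2)) :
    HasFDerivAt (DD a) (c0 • E0 + c1 • E1) x := by
  subst hc0 hc1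
  have hN : HasFDerivAt (fun y : Fin 2 → ℝ => a - y 1 * y 1)
      (0 - (x 1 • E1 + x 1 • E1)) x :=
    (hasFDerivAt_const a x).sub ((hE1 x).mul (hE1 x))
  have hQ := ((((hasFDerivAt_const (4:ℝ) x).mul (hE0 x)).mul (hE1 x)).mul
      ((hasFDerivAt_const a x).sub (hE1 x))).mul
      (((hasFDerivAt_const (1:ℝ) x).sub (hE0 x)).sub (hE1 x))
  have hQx : (4 * x 0 * x 1 * (a - x 1) * (1 - x 0 - x 1)) ≠ 0 := by positivity
  have hinv := (hasDerivAt_inv hQx).comp_hasFDerivAt x hQ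
  have big := hN.mul hinv
  refine big.congr_fderiv ?_
  ext v
  simp only [ContinuousLinearMap.coe_smul', Pi.smul_apply, ContinuousLinearMap.add_apply,
    ContinuousLinearMap.sub_apply, ContinuousLinearMap.smul_apply, ContinuousLinearMap.zero_apply,
    smul_eq_mul, mul_zero, E0, E1, ContinuousLinearMap.proj_apply, Pi.mul_apply, Pi.sub_apply,
    Pi.add_apply, Pi.neg_apply, Pi.pow_apply, Function.comp_apply]
  have hx0 : x 0 ≠ 0 := h0.ne'
  have hx1 : x 1 ≠ 0 := h1.ne'
  have hss : (1:ℝ) - x 0 - x 1 ≠ 0 := hs.ne'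
  have hww : a - x 1 ≠ 0 := hw.ne'
  field_simp
  ring

lemma part2 (a : ℝ) (ha : a ∈ Ioo (0:ℝ) 1) (x : Fin 2 → ℝ) (hx : x ∈ hirzInt a) :
    fderiv ℝ (fun y => (Hess (uGHirz a) y).det) x = 0 ↔
      (x 0 = (1 - x 1)/2 ∧
        2*(x 1)^4 - a*(x 1)^3 - 5*a*(x 1)^2 + a*(3*a+2)*(x 1) - a^2 = 0) := by
  obtain ⟨h0, h1, hs, hw, hN⟩ := hirz_facts ha hx
  have hx0 : x 0 ≠ 0 := h0.ne'
  have hx1 : x 1 ≠ 0 := h1.ne'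
  have hss : (1:ℝ) - x 0 - x 1 ≠ 0 := hs.ne'
  have hww : a - x 1 ≠ 0 := hw.ne'
  have hev : (fun y => (Hess (uGHirz a) y).det) =ᶠ[nhds x] DD a := by
    filter_upwards [(isOpen_hirzInt a).mem_nhds hx] with y hy
    obtain ⟨k0, k1, ks, kw, _⟩ := hirz_facts ha hy
    rw [part1 a ha y hy, DD]
    rw [div_eq_mul_inv, sq]
  set c0 : ℝ := (a - x 1 ^ 2) * (2 * x 0 + x 1 - 1) /
      (4 * x 0 ^ 2 * x 1 * (a - x 1) * (1 - x 0 - x 1) ^ 2) with hc0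
  set c1 : ℝ := (-2 * x 1 ^ 2 * (a - x 1) * (1 - x 0 - x 1)
        - (a - x 1 ^ 2) * ((a - 2 * x 1) * (1 - x 0 - x 1) - x 1 * (a - x 1))) /
      (4 * x 0 * x 1 ^ 2 * (a - x 1) ^ 2 * (1 - x 0 - x 1) ^ 2) with hc1
  have hfd : fderiv ℝ (fun y => (Hess (uGHirz a) y).det) x = c0 • E0 + c1 • E1 := by
    rw [hev.fderiv_eq]
    exact (hasFDerivAt_DD a x c0 c1 h0 h1 hs hw hc0 hc1).fderiv
  rw [hfd]
  have hd0 : (4 * x 0 ^ 2 * x 1 * (a - x 1) * (1 - x 0 - x 1) ^ 2) ≠ 0 := by positivity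
  have hd1 : (4 * x 0 * x 1 ^ 2 * (a - x 1) ^ 2 * (1 - x 0 - x 1) ^ 2) ≠ 0 := by positivity
  constructor
  · intro h
    have happ0 : c0 = 0 := by
      have := ContinuousLinearMap.ext_iff.mp h (Pi.single 0 1)
      simpa [E0, E1] using this
    have happ1 : c1 = 0 := by
      have := ContinuousLinearMap.ext_iff.mp h (Pi.single 1 1)
      simpa [E0, E1] using this
    rw [hc0, div_eq_zero_iff] at happ0
    have hnum0 := happ0.resolve_right hd0
    have hlin : 2 * x 0 + x 1 - 1 = 0 :=
      (mul_eq_zero.mp hnum0).resolve_left hN.ne'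
    have hx0eq : x 0 = (1 - x 1)/2 := by linarith
    refine ⟨hx0eq, ?_⟩
    rw [hc1, div_eq_zero_iff] at happ1
    have hnum1 := happ1.resolve_right hd1
    rw [hx0eq] at hnum1
    linear_combination 2 * hnum1
  · rintro ⟨hx0eq, hp⟩
    have hc0z : c0 = 0 := by
      rw [hc0, div_eq_zero_iff]
      left
      rw [hx0eq]
      ring
    have hc1z : c1 = 0 := by
      rw [hc1, div_eq_zero_iff]
      left
      rw [hx0eq]
      linear_combination hp / 2
    rw [hc0z, hc1z]
    simp

noncomputable def hh (a : ℝ) (y : ℝ) : ℝ :=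
  -2*y/(a - y^2) - 1/y + 1/(a - y) + 2/(1 - y)

lemma hh_mono (a : ℝ) (ha : a ∈ Ioo (0:ℝ) 1) {y1 y2 : ℝ}
    (hy1 : y1 ∈ Ioo 0 a) (hy2 : y2 ∈ Ioo 0 a) (h12 : y1 < y2) : hh a y1 < hh a y2 := by
  obtain ⟨ha0, ha1⟩ := ha
  obtain ⟨h10, h1a⟩ := hy1
  obtain ⟨h20, h2a⟩ := hy2
  set s := Real.sqrt a with hs
  have hs0 : 0 < s := Real.sqrt_pos.mpr ha0
  have hsa : s ^ 2 = a := Real.sq_sqrt ha0.le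
  have hsl1 : s < 1 := by nlinarith [hsa, hs0]
  have has : a < s := by nlinarith
  have key : ∀ y ∈ Ioo (0:ℝ) a, hh a y =
      (s - a)/((a - y)*(s - y)) + (-s/(y*(y + s))) + 2/(1 - y) := by
    intro y hy
    obtain ⟨hy0, hya⟩ := hy
    have hys : y < s := lt_trans hya has
    have hA : a = s^2 := hsa.symm
    have h1 : s^2 - y ≠ 0 := by nlinarith
    have h2 : s - y ≠ 0 := by linarith
    have h3 : y ≠ 0 := hy0.ne'
    have h4 : y + s ≠ 0 := by positivity
    have h5 : (1:ℝ) - y ≠ 0 := by nlinarith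
    have h6 : s^2 - y^2 ≠ 0 := by nlinarith
    rw [hh, hA]
    field_simp
    ring
  rw [key y1 ⟨h10, h1a⟩, key y2 ⟨h20, h2a⟩]
  have hy1s : y1 < s := lt_trans h1a has
  have hy2s : y2 < s := lt_trans h2a has
  have t1 : (s - a)/((a - y1)*(s - y1)) < (s - a)/((a - y2)*(s - y2)) := by
    apply div_lt_div_of_pos_left (by linarith) (by nlinarith)
    nlinarith
  have t2 : -s/(y1*(y1 + s)) < -s/(y2*(y2 + s)) := by
    rw [neg_div, neg_div, neg_lt_neg_iff]
    apply div_lt_div_of_pos_left hs0 (by positivity)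
    nlinarith
  have t3 : 2/(1 - y1) < 2/(1 - y2) := by
    apply div_lt_div_of_pos_left (by norm_num) (by linarith)
    linarith
  linarith

lemma part3 (a : ℝ) (ha : a ∈ Ioo (0:ℝ) 1) :
    ∃! y, y ∈ Ioo (0:ℝ) a ∧
      2*y^4 - a*y^3 - 5*a*y^2 + a*(3*a+2)*y - a^2 = 0 := by
  obtain ⟨ha0, ha1⟩ := ha
  set p : ℝ → ℝ := fun y => 2*y^4 - a*y^3 - 5*a*y^2 + a*(3*a+2)*y - a^2 with hp
  have hfac : ∀ y ∈ Ioo (0:ℝ) a, p y = (y*(a - y)*(1 - y)*(a - y^2)) * hh a y := by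
    intro y hy
    obtain ⟨hy0, hya⟩ := hy
    have h1 : a - y ≠ 0 := by linarith
    have h3 : y ≠ 0 := hy0.ne'
    have h5 : (1:ℝ) - y ≠ 0 := by nlinarith
    have h6 : a - y^2 ≠ 0 := by nlinarith
    show 2*y^4 - a*y^3 - 5*a*y^2 + a*(3*a+2)*y - a^2 = _
    rw [hh]
    field_simp
    ring
  have hmpos : ∀ y ∈ Ioo (0:ℝ) a, 0 < y*(a - y)*(1 - y)*(a - y^2) := by
    intro y hy
    obtain ⟨hy0, hya⟩ := hy
    have hl1 : y < 1 := by linarith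
    have h6 : 0 < a - y^2 := by nlinarith
    have h7 : (0:ℝ) < 1 - y := by linarith
    have h8 : 0 < a - y := by linarith
    positivity
  have hcont : ContinuousOn p (Icc 0 a) := by fun_prop
  have hiv := intermediate_value_Ioo ha0.le hcont
  have h0mem : (0:ℝ) ∈ Ioo (p 0) (p a) := by
    have ht : 0 < a*(1-a) := mul_pos ha0 (by linarith)
    constructor
    · show p 0 < 0
      simp only [hp]
      nlinarith
    · show (0:ℝ) < p a
      simp only [hp]
      nlinarith [mul_pos ht ht]
  obtain ⟨y0, hy0mem, hy0⟩ := hiv h0mem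
  have hhz : ∀ y ∈ Ioo (0:ℝ) a, p y = 0 → hh a y = 0 := by
    intro y hy hpy
    have h := hfac y hy
    rw [hpy] at h
    exact (mul_eq_zero.mp h.symm).resolve_left (hmpos y hy).ne'
  refine ⟨y0, ⟨hy0mem, hy0⟩, ?_⟩
  rintro y ⟨hymem, hy⟩
  have hy' : p y = 0 := hy
  by_contra hne
  have hz : hh a y = 0 := hhz y hymem hy'
  have hz0 : hh a y0 = 0 := hhz y0 hy0mem hy0
  rcases lt_or_gt_of_ne hne with h | h
  · have := hh_mono a ⟨ha0, ha1⟩ hymem hy0mem h; rw [hz, hz0] at this; exact lt_irrefl 0 this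
  · have := hh_mono a ⟨ha0, ha1⟩ hy0mem hymem h; rw [hz, hz0] at this; exact lt_irrefl 0 this

theorem stmt18 (a : ℝ) (ha : a ∈ Ioo (0:ℝ) 1) :
    (∀ x ∈ hirzInt a, (Hess (uGHirz a) x).det =
      (a - (x 1)^2) / (4 * x 0 * x 1 * (a - x 1) * (1 - x 0 - x 1))) ∧
    (∀ x ∈ hirzInt a,
      (fderiv ℝ (fun y => (Hess (uGHirz a) y).det) x = 0 ↔
        (x 0 = (1 - x 1)/2 ∧
          2*(x 1)^4 - a*(x 1)^3 - 5*a*(x 1)^2 + a*(3*a+2)*(x 1) - a^2 = 0))) ∧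
    (∃! y, y ∈ Ioo (0:ℝ) a ∧
      2*y^4 - a*y^3 - 5*a*y^2 + a*(3*a+2)*y - a^2 = 0) ∧
    (∃! x, x ∈ hirzInt a ∧
      fderiv ℝ (fun y => (Hess (uGHirz a) y).det) x = 0) := by
  obtain ⟨ha0, ha1⟩ := ha
  refine ⟨fun x hx => part1 a ⟨ha0, ha1⟩ x hx, fun x hx => part2 a ⟨ha0, ha1⟩ x hx,
    part3 a ⟨ha0, ha1⟩, ?_⟩
  obtain ⟨y0, ⟨⟨hy00, hy0a⟩, hy0root⟩, huniq⟩ := part3 a ⟨ha0, ha1⟩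
  have hy01 : y0 < 1 := lt_trans hy0a ha1
  have hxmem : (![(1 - y0)/2, y0] : Fin 2 → ℝ) ∈ hirzInt a := by
    refine ⟨?_, ?_, ?_, ?_⟩ <;> simp [Matrix.cons_val_zero, Matrix.cons_val_one] <;> linarith
  refine ⟨![(1 - y0)/2, y0], ⟨hxmem, ?_⟩, ?_⟩
  · rw [part2 a ⟨ha0, ha1⟩ _ hxmem]
    constructor
    · simp
    · simpa using hy0root
  · rintro x ⟨hx, hfz⟩
    rw [part2 a ⟨ha0, ha1⟩ x hx] at hfz
    obtain ⟨hx0eq, hproot⟩ := hfz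
    obtain ⟨k0, k1, ksum, ka⟩ := hx
    have hx1eq : x 1 = y0 := huniq (x 1) ⟨⟨k1, ka⟩, hproot⟩
    funext i
    fin_cases i
    · show x 0 = (1 - y0)/2
      rw [hx0eq, hx1eq]
    · exact hx1eq
end

section
/- Let ν₁, …, ν_d ∈ ℝ² span ℝ², let λ₁, …, λ_d ∈ ℝ, set l_i(x) = ⟨x, ν_i⟩ − λ_i, and let Ω = {x ∈ ℝ² : l_i(x) > 0 for all i} be nonempty. Define u_G = (1/2) ∑_{i=1}^d ( l_i log l_i − l_i ) on Ω. Then for every x ∈ Ω the Hessian Hess u_G (x) = (1/2) ∑_{i=1}^d ν_i ν_iᵀ / l_i(x) is positive definite, and x is a critical point of det Hess u_G if and only if ∑_{i,j=1}^d ( det(ν_i, ν_j) )² / ( l_i(x)² l_j(x) ) · ν_i = 0 in ℝ², where det(ν_i, ν_j) denotes the determinant of the 2×2 matrix with columns ν_i and ν_j. -/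
open Real Set Topology Filter Matrix

/-- The affine functions `l_i(x) = ⟨x, ν_i⟩ - λ_i` defining the polytope. -/
noncomputable def ellFn {n d : ℕ} (ν : Fin d → Fin n → ℝ) (lam : Fin d → ℝ)
    (i : Fin d) (x : Fin n → ℝ) : ℝ :=
  (∑ j, x j * ν i j) - lam i

/-- The Guillemin potential `u_G = (1/2) ∑ (l_i log l_i - l_i)`. -/
noncomputable def guillemin {n d : ℕ} (ν : Fin d → Fin n → ℝ) (lam : Fin d → ℝ)
    (x : Fin n → ℝ) : ℝ :=
  (1/2) * ∑ i, (ellFn ν lam i x * Real.log (ellFn ν lam i x) - ellFn ν lam i x)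

/-- The polytope `P = {x : l_i(x) ≥ 0 for all i}`. -/
def polyP {n d : ℕ} (ν : Fin d → Fin n → ℝ) (lam : Fin d → ℝ) : Set (Fin n → ℝ) :=
  {x | ∀ i, 0 ≤ ellFn ν lam i x}

/-- The "interior" `{x : l_i(x) > 0 for all i}` of the polytope. -/
def polyInt {n d : ℕ} (ν : Fin d → Fin n → ℝ) (lam : Fin d → ℝ) : Set (Fin n → ℝ) :=
  {x | ∀ i, 0 < ellFn ν lam i x}

variable {n d : ℕ} (ν : Fin d → Fin n → ℝ) (lam : Fin d → ℝ)

noncomputable def Lmap (i : Fin d) : (Fin n → ℝ) →L[ℝ] ℝ :=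
  ∑ j, ν i j • (ContinuousLinearMap.proj j : (Fin n → ℝ) →L[ℝ] ℝ)

lemma Lmap_apply (i : Fin d) (v : Fin n → ℝ) : Lmap ν i v = ∑ j, v j * ν i j := by
  simp [Lmap, mul_comm]

lemma Lmap_single (i : Fin d) (p : Fin n) : Lmap ν i (Pi.single p 1) = ν i p := by
  simp [Lmap_apply, Pi.single_apply, Finset.sum_ite_eq']

lemma hasFDerivAt_ell (i : Fin d) (y : Fin n → ℝ) :
    HasFDerivAt (ellFn ν lam i) (Lmap ν i) y := by
  have h : ellFn ν lam i = fun x => Lmap ν i x - lam i := by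
    funext x; simp [ellFn, Lmap_apply]
  rw [h]
  exact (Lmap ν i).hasFDerivAt.sub_const _

lemma isOpen_polyInt : IsOpen (polyInt ν lam) := by
  have : polyInt ν lam = ⋂ i, (ellFn ν lam i) ⁻¹' Set.Ioi 0 := by
    ext y; simp [polyInt]
  rw [this]
  exact isOpen_iInter_of_finite fun i =>
    (isOpen_Ioi).preimage (continuous_iff_continuousAt.mpr fun y => (hasFDerivAt_ell ν lam i y).continuousAt)

lemma hasFDerivAt_guillemin {y : Fin n → ℝ} (hy : y ∈ polyInt ν lam) :
    HasFDerivAt (guillemin ν lam)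
      ((1/2 : ℝ) • ∑ i, Real.log (ellFn ν lam i y) • Lmap ν i) y := by
  have h : ∀ i : Fin d, HasFDerivAt (fun x => ellFn ν lam i x * Real.log (ellFn ν lam i x) - ellFn ν lam i x)
      (Real.log (ellFn ν lam i y) • Lmap ν i) y := by
    intro i
    have ht : (0:ℝ) < ellFn ν lam i y := hy i
    have hφ : HasDerivAt (fun t : ℝ => t * Real.log t - t) (Real.log (ellFn ν lam i y)) (ellFn ν lam i y) := by
      have h1 : HasDerivAt (fun t : ℝ => t * Real.log t - t)
          (1 * Real.log (ellFn ν lam i y) + ellFn ν lam i y * (ellFn ν lam i y)⁻¹ - 1) (ellFn ν lam i y) :=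
        ((hasDerivAt_id _).mul (Real.hasDerivAt_log ht.ne')).sub (hasDerivAt_id _)
      convert h1 using 1
      field_simp
      ring
    exact hφ.comp_hasFDerivAt y (hasFDerivAt_ell ν lam i y)
  have := (HasFDerivAt.fun_sum (fun i (_ : i ∈ Finset.univ) => h i)).fun_const_smul (1/2 : ℝ)
  exact this

lemma pd_guillemin (q : Fin n) {y : Fin n → ℝ} (hy : y ∈ polyInt ν lam) :
    pd q (guillemin ν lam) y = (1/2 : ℝ) * ∑ i, Real.log (ellFn ν lam i y) * ν i q := by
  rw [pd, (hasFDerivAt_guillemin ν lam hy).fderiv]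
  simp [Lmap_single, smul_eq_mul]

lemma hasFDerivAt_pd_guillemin (q : Fin n) {y : Fin n → ℝ} (hy : y ∈ polyInt ν lam) :
    HasFDerivAt (pd q (guillemin ν lam))
      ((1/2 : ℝ) • ∑ i, (ν i q / ellFn ν lam i y) • Lmap ν i) y := by
  have hg : HasFDerivAt (fun z => (1/2 : ℝ) * ∑ i, Real.log (ellFn ν lam i z) * ν i q)
      ((1/2 : ℝ) • ∑ i, (ν i q / ellFn ν lam i y) • Lmap ν i) y := by
    have h : ∀ i : Fin d, HasFDerivAt (fun z => Real.log (ellFn ν lam i z) * ν i q)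
        ((ν i q / ellFn ν lam i y) • Lmap ν i) y := by
      intro i
      have ht : (0:ℝ) < ellFn ν lam i y := hy i
      have h1 : HasFDerivAt (fun z => Real.log (ellFn ν lam i z))
          ((ellFn ν lam i y)⁻¹ • Lmap ν i) y :=
        (Real.hasDerivAt_log ht.ne').comp_hasFDerivAt y (hasFDerivAt_ell ν lam i y)
      have h2 := h1.mul_const (ν i q)
      refine h2.congr_fderiv ?_
      rw [smul_smul, div_eq_mul_inv]
    exact (HasFDerivAt.fun_sum (fun i (_ : i ∈ Finset.univ) => h i)).const_smul (1/2 : ℝ)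
  refine hg.congr_of_eventuallyEq ?_
  filter_upwards [(isOpen_polyInt ν lam).mem_nhds hy] with z hz
  exact pd_guillemin ν lam q hz

lemma Hess_guillemin {y : Fin n → ℝ} (hy : y ∈ polyInt ν lam) :
    Hess (guillemin ν lam) y =
      Matrix.of (fun p q => (1/2 : ℝ) * ∑ i, ν i p * ν i q / ellFn ν lam i y) := by
  ext p q
  show pd p (pd q (guillemin ν lam)) y = _
  rw [pd, (hasFDerivAt_pd_guillemin ν lam q hy).fderiv]
  simp only [ContinuousLinearMap.coe_smul', Pi.smul_apply, ContinuousLinearMap.sum_apply,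
    ContinuousLinearMap.coe_smul, Lmap_single, smul_eq_mul, Matrix.of_apply]
  rw [Finset.mul_sum, Finset.mul_sum]
  congr 1; funext i
  simp [Lmap_single]
  ring

lemma quadform (y : Fin n → ℝ) (v : Fin n → ℝ) :
    dotProduct v ((Matrix.of (fun p q => (1/2 : ℝ) * ∑ i, ν i p * ν i q / ellFn ν lam i y)) *ᵥ v) =
    (1/2 : ℝ) * ∑ i, (∑ p, v p * ν i p)^2 / ellFn ν lam i y := by
  simp only [dotProduct, Matrix.mulVec, dotProduct, Matrix.of_apply]
  have step1 : ∀ p : Fin n, (v p * ∑ q, ((1:ℝ)/2 * ∑ i, ν i p * ν i q / ellFn ν lam i y) * v q)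
      = ∑ i, ∑ q, 1/2 * (v p * ν i p * (v q * ν i q) / ellFn ν lam i y) := by
    intro p
    rw [Finset.mul_sum, Finset.sum_comm]
    refine Finset.sum_congr rfl fun q _ => ?_
    simp only [Finset.sum_mul, Finset.mul_sum]
    exact Finset.sum_congr rfl fun i _ => by ring
  simp only [step1]
  rw [Finset.sum_comm, Finset.mul_sum]
  refine Finset.sum_congr rfl fun i _ => ?_
  rw [sq, Finset.sum_mul_sum]
  simp only [Finset.sum_div, Finset.mul_sum]

lemma posdef_aux {y : Fin n → ℝ} (hy : y ∈ polyInt ν lam)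
    (hspan : Submodule.span ℝ (Set.range ν) = ⊤) :
    (Matrix.of (fun p q => (1/2 : ℝ) * ∑ i, ν i p * ν i q / ellFn ν lam i y) :
      Matrix (Fin n) (Fin n) ℝ).PosDef := by
  rw [Matrix.posDef_iff_dotProduct_mulVec]
  constructor
  · unfold Matrix.IsHermitian
    ext p q
    simp only [Matrix.conjTranspose_apply, Matrix.of_apply, star_trivial]
    congr 1
    exact Finset.sum_congr rfl fun i _ => by ring
  · intro v hv
    rw [show (star v) = v from rfl, quadform]
    have hnonneg : ∀ i ∈ Finset.univ, (0:ℝ) ≤ (∑ p, v p * ν i p)^2 / ellFn ν lam i y :=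
      fun i _ => div_nonneg (sq_nonneg _) (hy i).le
    have hex : ∃ i, (∑ p, v p * ν i p) ≠ 0 := by
      by_contra h
      push_neg at h
      apply hv
      let f : (Fin n → ℝ) →ₗ[ℝ] ℝ :=
        { toFun := fun w => ∑ p, v p * w p
          map_add' := by intro a b; simp [mul_add, Finset.sum_add_distrib]
          map_smul' := by intro c a; simp [Finset.mul_sum, mul_comm, mul_assoc, mul_left_comm] }
      have hker : Submodule.span ℝ (Set.range ν) ≤ LinearMap.ker f := by
        rw [Submodule.span_le]
        rintro _ ⟨i, rfl⟩
        exact h i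
      rw [hspan, top_le_iff] at hker
      have hfv : f v = 0 := by
        have : v ∈ LinearMap.ker f := by rw [hker]; trivial
        exact this
      have : ∑ p, v p * v p = 0 := hfv
      funext p
      have := (Finset.sum_eq_zero_iff_of_nonneg (fun p _ => mul_self_nonneg (v p))).mp this p (Finset.mem_univ p)
      exact mul_self_eq_zero.mp this
    obtain ⟨i, hi⟩ := hex
    have hpos : (0:ℝ) < (∑ p, v p * ν i p)^2 / ellFn ν lam i y :=
      div_pos (by positivity) (hy i)
    have := Finset.sum_pos' hnonneg ⟨i, Finset.mem_univ i, hpos⟩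
    positivity

lemma det_Hess_eq {d : ℕ} (ν : Fin d → Fin 2 → ℝ) (lam : Fin d → ℝ)
    {y : Fin 2 → ℝ} (hy : y ∈ polyInt ν lam) :
    (Hess (guillemin ν lam) y).det =
      (1/4 : ℝ) * ∑ i, ∑ j, (ν i 0^2 * ν j 1^2 - ν i 0 * ν i 1 * ν j 0 * ν j 1) /
        (ellFn ν lam i y * ellFn ν lam j y) := by
  rw [Hess_guillemin ν lam hy, Matrix.det_fin_two]
  simp only [Matrix.of_apply]
  have prod : ∀ f g : Fin d → ℝ, ((1:ℝ)/2 * ∑ i, f i) * ((1:ℝ)/2 * ∑ j, g j)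
      = (1/4 : ℝ) * ∑ i, ∑ j, f i * g j := by
    intro f g
    rw [show ((1:ℝ)/2 * ∑ i, f i) * ((1:ℝ)/2 * ∑ j, g j)
        = (1/4 : ℝ) * ((∑ i, f i) * (∑ j, g j)) by ring, Finset.sum_mul_sum]
  rw [prod, prod, ← mul_sub, ← Finset.sum_sub_distrib]
  congr 1
  refine Finset.sum_congr rfl fun i _ => ?_
  rw [← Finset.sum_sub_distrib]
  refine Finset.sum_congr rfl fun j _ => ?_
  have hli := (hy i).ne'
  have hlj := (hy j).ne'
  field_simp

lemma hasFDerivAt_detH {d : ℕ} (ν : Fin d → Fin 2 → ℝ) (lam : Fin d → ℝ)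
    {x : Fin 2 → ℝ} (hx : x ∈ polyInt ν lam) :
    HasFDerivAt (fun y => (Hess (guillemin ν lam) y).det)
      ((1/4 : ℝ) • ∑ i, ∑ j,
        ((ν i 0^2 * ν j 1^2 - ν i 0 * ν i 1 * ν j 0 * ν j 1) *
          (-((ellFn ν lam i x * ellFn ν lam j x)^2)⁻¹)) •
        (ellFn ν lam i x • Lmap ν j + ellFn ν lam j x • Lmap ν i)) x := by
  have hterm : ∀ i j : Fin d, HasFDerivAt
      (fun y => (ν i 0^2 * ν j 1^2 - ν i 0 * ν i 1 * ν j 0 * ν j 1) /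
        (ellFn ν lam i y * ellFn ν lam j y))
      (((ν i 0^2 * ν j 1^2 - ν i 0 * ν i 1 * ν j 0 * ν j 1) *
          (-((ellFn ν lam i x * ellFn ν lam j x)^2)⁻¹)) •
        (ellFn ν lam i x • Lmap ν j + ellFn ν lam j x • Lmap ν i)) x := by
    intro i j
    have hg : HasFDerivAt (fun y => ellFn ν lam i y * ellFn ν lam j y)
        (ellFn ν lam i x • Lmap ν j + ellFn ν lam j x • Lmap ν i) x :=
      (hasFDerivAt_ell ν lam i x).mul (hasFDerivAt_ell ν lam j x)
    have hne : ellFn ν lam i x * ellFn ν lam j x ≠ 0 :=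
      (mul_pos (hx i) (hx j)).ne'
    have hinv := (hasDerivAt_inv hne).comp_hasFDerivAt x hg
    have := hinv.const_mul (ν i 0^2 * ν j 1^2 - ν i 0 * ν i 1 * ν j 0 * ν j 1)
    refine this.congr_of_eventuallyEq ?_ |>.congr_fderiv ?_
    · filter_upwards with z using by rw [div_eq_mul_inv]; rfl
    · rw [smul_smul]
  have hsum : ∀ i : Fin d, HasFDerivAt
      (fun y => ∑ j, (ν i 0^2 * ν j 1^2 - ν i 0 * ν i 1 * ν j 0 * ν j 1) /
        (ellFn ν lam i y * ellFn ν lam j y))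
      (∑ j, ((ν i 0^2 * ν j 1^2 - ν i 0 * ν i 1 * ν j 0 * ν j 1) *
          (-((ellFn ν lam i x * ellFn ν lam j x)^2)⁻¹)) •
        (ellFn ν lam i x • Lmap ν j + ellFn ν lam j x • Lmap ν i)) x :=
    fun i => HasFDerivAt.fun_sum (fun j _ => hterm i j)
  have hD := (HasFDerivAt.fun_sum (fun i (_ : i ∈ Finset.univ) => hsum i)).const_smul (1/4 : ℝ)
  refine hD.congr_of_eventuallyEq ?_
  filter_upwards [(isOpen_polyInt ν lam).mem_nhds hx] with z hz
  rw [det_Hess_eq ν lam hz]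
  simp [smul_eq_mul]

lemma key_single {d : ℕ} (ν : Fin d → Fin 2 → ℝ) (lam : Fin d → ℝ)
    {x : Fin 2 → ℝ} (hx : x ∈ polyInt ν lam) (p : Fin 2) :
    ((1/4 : ℝ) • ∑ i, ∑ j,
        ((ν i 0^2 * ν j 1^2 - ν i 0 * ν i 1 * ν j 0 * ν j 1) *
          (-((ellFn ν lam i x * ellFn ν lam j x)^2)⁻¹)) •
        (ellFn ν lam i x • Lmap ν j + ellFn ν lam j x • Lmap ν i)) (Pi.single p 1) =
    (-(1/4 : ℝ)) * ∑ i, ∑ j, ((Matrix.det !![ν i 0, ν j 0; ν i 1, ν j 1])^2 /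
        ((ellFn ν lam i x)^2 * ellFn ν lam j x)) * ν i p := by
  have hlpos : ∀ i, 0 < ellFn ν lam i x := hx
  simp only [ContinuousLinearMap.coe_smul', Pi.smul_apply, ContinuousLinearMap.sum_apply,
    ContinuousLinearMap.coe_smul, ContinuousLinearMap.add_apply, Lmap_single, smul_eq_mul]
  have split : ∀ i j : Fin d,
      ((ν i 0^2 * ν j 1^2 - ν i 0 * ν i 1 * ν j 0 * ν j 1) *
          (-((ellFn ν lam i x * ellFn ν lam j x)^2)⁻¹)) *
        (ellFn ν lam i x * ν j p + ellFn ν lam j x * ν i p)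
      = (-(ν i 0^2 * ν j 1^2 - ν i 0 * ν i 1 * ν j 0 * ν j 1) * ν i p /
          ((ellFn ν lam i x)^2 * ellFn ν lam j x))
        + (-(ν i 0^2 * ν j 1^2 - ν i 0 * ν i 1 * ν j 0 * ν j 1) * ν j p /
          (ellFn ν lam i x * (ellFn ν lam j x)^2)) := by
    intro i j
    have hi := (hlpos i).ne'
    have hj := (hlpos j).ne'
    field_simp
    ring
  simp only [split, Finset.sum_add_distrib]
  rw [Finset.sum_comm (f := fun i j => -(ν i 0^2 * ν j 1^2 - ν i 0 * ν i 1 * ν j 0 * ν j 1) * ν j p /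
          (ellFn ν lam i x * (ellFn ν lam j x)^2))]
  rw [← Finset.sum_add_distrib]
  rw [show (-(1/4 : ℝ)) = (1/4 : ℝ) * (-1) by norm_num, mul_assoc]
  congr 1
  rw [neg_one_mul, ← Finset.sum_neg_distrib]
  refine Finset.sum_congr rfl fun i _ => ?_
  rw [← Finset.sum_add_distrib, ← Finset.sum_neg_distrib]
  refine Finset.sum_congr rfl fun j _ => ?_
  have hi := (hlpos i).ne'
  have hj := (hlpos j).ne'
  rw [Matrix.det_fin_two_of]
  field_simp
  ring

theorem stmt19 (d : ℕ) (ν : Fin d → Fin 2 → ℝ) (lam : Fin d → ℝ)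
    (hspan : Submodule.span ℝ (Set.range ν) = ⊤)
    (hne : (polyInt ν lam).Nonempty)
    (x : Fin 2 → ℝ) (hx : x ∈ polyInt ν lam) :
    Hess (guillemin ν lam) x =
      Matrix.of (fun p q => (1/2 : ℝ) * ∑ i, ν i p * ν i q / ellFn ν lam i x) ∧
    (Hess (guillemin ν lam) x).PosDef ∧
    (fderiv ℝ (fun y => (Hess (guillemin ν lam) y).det) x = 0 ↔
      ∑ i, ∑ j, (((Matrix.det !![ν i 0, ν j 0; ν i 1, ν j 1])^2 /
        ((ellFn ν lam i x)^2 * ellFn ν lam j x)) • ν i) = (0 : Fin 2 → ℝ)) := by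
  refine ⟨Hess_guillemin ν lam hx, ?_, ?_⟩
  · rw [Hess_guillemin ν lam hx]
    exact posdef_aux ν lam hx hspan
  · set E := ((1/4 : ℝ) • ∑ i, ∑ j,
        ((ν i 0^2 * ν j 1^2 - ν i 0 * ν i 1 * ν j 0 * ν j 1) *
          (-((ellFn ν lam i x * ellFn ν lam j x)^2)⁻¹)) •
        (ellFn ν lam i x • Lmap ν j + ellFn ν lam j x • Lmap ν i)) with hE
    have hfd : fderiv ℝ (fun y => (Hess (guillemin ν lam) y).det) x = E :=
      (hasFDerivAt_detH ν lam hx).fderiv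
    have hcomp : ∀ p : Fin 2,
        (∑ i, ∑ j, (((Matrix.det !![ν i 0, ν j 0; ν i 1, ν j 1])^2 /
          ((ellFn ν lam i x)^2 * ellFn ν lam j x)) • ν i)) p
        = ∑ i, ∑ j, ((Matrix.det !![ν i 0, ν j 0; ν i 1, ν j 1])^2 /
          ((ellFn ν lam i x)^2 * ellFn ν lam j x)) * ν i p := by
      intro p
      rw [Finset.sum_apply]
      refine Finset.sum_congr rfl fun i _ => ?_
      rw [Finset.sum_apply]
      rfl
    rw [hfd]
    constructor
    · intro h0
      funext p
      rw [hcomp p, Pi.zero_apply]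
      have h1 : E (Pi.single p 1) = 0 := by rw [h0]; rfl
      rw [key_single ν lam hx p] at h1
      have := mul_eq_zero.mp h1
      rcases this with h | h
      · norm_num at h
      · exact h
    · intro hv
      have hT : ∀ p : Fin 2, E (Pi.single p 1) = 0 := by
        intro p
        rw [key_single ν lam hx p, ← hcomp p, hv, Pi.zero_apply, mul_zero]
      ext v
      have hv2 : v = ∑ p, v p • (Pi.single p 1 : Fin 2 → ℝ) := by
        funext q
        simp [Finset.sum_apply, Pi.single_apply, mul_ite, Finset.sum_ite_eq']
      rw [show E v = E (∑ p, v p • (Pi.single p 1 : Fin 2 → ℝ)) by rw [← hv2]]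
      rw [map_sum]
      simp only [_root_.map_smul, hT, smul_zero, Finset.sum_const_zero]
      rfl
end
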